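/- Let H be a real Hilbert space, let u₁, …, u_d be an orthonormal family in H, and let φ₁, …, φ_N ∈ H satisfy ‖φ_i‖² = 1 for all i. Then Σ_{k=1}^d Σ_{i=1}^N ⟨u_k, φ_i⟩² ≤ d · ( 1 + √(Σ_{i ≠ j} ⟨φ_i, φ_j⟩²) ). -/

import Mathlib

open Finset
open scoped RealInnerProductSpace

lemma aux_boas_bellman {H : Type*} [NormedAddCommGroup H] [InnerProductSpace ℝ H]
    {N : ℕ} (φ : Fin N → H) (hφ : ∀ i, ‖φ i‖ ^ 2 = 1)
    (u : H) (hu : ‖u‖ = 1) :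
    ∑ i, ⟪u, φ i⟫ ^ 2 ≤
      1 + Real.sqrt (∑ p ∈ (univ : Finset (Fin N × Fin N)).filter
        (fun p => p.1 ≠ p.2), ⟪φ p.1, φ p.2⟫ ^ 2) := by
  set c : Fin N → ℝ := fun i => ⟪u, φ i⟫ with hc
  set S := ∑ i, c i ^ 2 with hS
  set B := ∑ p ∈ (univ : Finset (Fin N × Fin N)).filter
      (fun p => p.1 ≠ p.2), ⟪φ p.1, φ p.2⟫ ^ 2 with hB
  have hS0 : 0 ≤ S := Finset.sum_nonneg fun i _ => sq_nonneg _
  have hB0 : 0 ≤ B := Finset.sum_nonneg fun p _ => sq_nonneg _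
  have hsB : 0 ≤ Real.sqrt B := Real.sqrt_nonneg _
  set v := ∑ i, c i • φ i with hv
  have h1 : ⟪u, v⟫ = S := by
    simp [hv, inner_sum, real_inner_smul_right, hS, sq]; rfl
  have h2 : S ≤ ‖v‖ := by
    calc S = ⟪u, v⟫ := h1.symm
    _ ≤ ‖u‖ * ‖v‖ := real_inner_le_norm _ _
    _ = ‖v‖ := by rw [hu, one_mul]
  -- expand ‖v‖²
  have h3 : ‖v‖ ^ 2 = ∑ p ∈ (univ : Finset (Fin N × Fin N)),
      c p.1 * c p.2 * ⟪φ p.1, φ p.2⟫ := by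
    rw [← real_inner_self_eq_norm_sq, hv, inner_sum]
    rw [← Finset.univ_product_univ, Finset.sum_product]
    refine Finset.sum_congr rfl fun j _ => ?_
    rw [real_inner_smul_right, sum_inner, Finset.mul_sum]
    refine Finset.sum_congr rfl fun i _ => ?_
    rw [real_inner_smul_left, real_inner_comm (φ i) (φ j)]; ring
  -- split into diagonal and off-diagonal
  have hsplit : ∑ p ∈ (univ : Finset (Fin N × Fin N)),
      c p.1 * c p.2 * ⟪φ p.1, φ p.2⟫
      = S + ∑ p ∈ (univ : Finset (Fin N × Fin N)).filter (fun p => p.1 ≠ p.2),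
          c p.1 * c p.2 * ⟪φ p.1, φ p.2⟫ := by
    rw [← Finset.sum_filter_add_sum_filter_not (univ : Finset (Fin N × Fin N))
      (fun p => p.1 = p.2)]
    congr 1
    · have : ∑ p ∈ (univ : Finset (Fin N × Fin N)).filter (fun p => p.1 = p.2),
          c p.1 * c p.2 * ⟪φ p.1, φ p.2⟫ = ∑ i : Fin N, c i * c i * ⟪φ i, φ i⟫ := by
        refine Finset.sum_nbij' (fun p => p.1) (fun i => (i, i)) ?_ ?_ ?_ ?_ ?_
        · intro p hp; simp
        · intro i _; simp
        · intro p hp; simp at hp; exact Prod.ext rfl hp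
        · intro i _; rfl
        · intro p hp; simp at hp; simp [hp]
      rw [this, hS]
      refine Finset.sum_congr rfl fun i _ => ?_
      rw [real_inner_self_eq_norm_sq, hφ i]; ring
  -- off-diagonal Cauchy-Schwarz
  have h4 : ∑ p ∈ (univ : Finset (Fin N × Fin N)).filter (fun p => p.1 ≠ p.2),
      c p.1 * c p.2 * ⟪φ p.1, φ p.2⟫ ≤ S * Real.sqrt B := by
    have hcs := Finset.sum_mul_sq_le_sq_mul_sq
      ((univ : Finset (Fin N × Fin N)).filter (fun p => p.1 ≠ p.2))
      (fun p => c p.1 * c p.2) (fun p => ⟪φ p.1, φ p.2⟫)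
    have hT : ∑ p ∈ (univ : Finset (Fin N × Fin N)).filter (fun p => p.1 ≠ p.2),
        (c p.1 * c p.2) ^ 2 ≤ S ^ 2 := by
      have hle : ∑ p ∈ (univ : Finset (Fin N × Fin N)).filter (fun p => p.1 ≠ p.2),
          (c p.1 * c p.2) ^ 2 ≤ ∑ p ∈ (univ : Finset (Fin N × Fin N)),
          (c p.1 * c p.2) ^ 2 :=
        Finset.sum_le_sum_of_subset_of_nonneg (Finset.filter_subset _ _)
          (fun p _ _ => sq_nonneg _)
      have heq : ∑ p ∈ (univ : Finset (Fin N × Fin N)), (c p.1 * c p.2) ^ 2 = S ^ 2 := by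
        rw [← Finset.univ_product_univ, Finset.sum_product, hS, sq (∑ i, c i ^ 2),
          Finset.sum_mul]
        refine Finset.sum_congr rfl fun i _ => ?_
        rw [Finset.mul_sum]
        exact Finset.sum_congr rfl fun j _ => by ring
      linarith
    have habs : ∑ p ∈ (univ : Finset (Fin N × Fin N)).filter (fun p => p.1 ≠ p.2),
        c p.1 * c p.2 * ⟪φ p.1, φ p.2⟫ ≤
        Real.sqrt ((∑ p ∈ (univ : Finset (Fin N × Fin N)).filter (fun p => p.1 ≠ p.2),
          (c p.1 * c p.2) ^ 2) * B) := by
      rw [← hB] at hcs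
      calc _ ≤ |∑ p ∈ (univ : Finset (Fin N × Fin N)).filter (fun p => p.1 ≠ p.2),
            c p.1 * c p.2 * ⟪φ p.1, φ p.2⟫| := le_abs_self _
      _ = Real.sqrt ((∑ p ∈ (univ : Finset (Fin N × Fin N)).filter (fun p => p.1 ≠ p.2),
            c p.1 * c p.2 * ⟪φ p.1, φ p.2⟫) ^ 2) := (Real.sqrt_sq_eq_abs _).symm
      _ ≤ _ := Real.sqrt_le_sqrt hcs
    calc _ ≤ Real.sqrt ((∑ p ∈ (univ : Finset (Fin N × Fin N)).filter (fun p => p.1 ≠ p.2),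
          (c p.1 * c p.2) ^ 2) * B) := habs
    _ ≤ Real.sqrt (S ^ 2 * B) := by
        apply Real.sqrt_le_sqrt
        exact mul_le_mul_of_nonneg_right hT hB0
    _ = S * Real.sqrt B := by
        rw [Real.sqrt_mul (sq_nonneg S), Real.sqrt_sq hS0]
  -- combine
  have h5 : S ^ 2 ≤ S * (1 + Real.sqrt B) := by
    have : S ^ 2 ≤ ‖v‖ ^ 2 := by
      have := abs_le_abs (le_refl S)
      nlinarith [norm_nonneg v]
    rw [h3, hsplit] at this
    nlinarith
  nlinarith [sq_nonneg (S - (1 + Real.sqrt B))]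

theorem orthonormal_family_inner_sum_bound
    {H : Type*} [NormedAddCommGroup H] [InnerProductSpace ℝ H] [CompleteSpace H]
    (d N : ℕ) (u : Fin d → H) (hu : Orthonormal ℝ u)
    (φ : Fin N → H) (hφ : ∀ i, ‖φ i‖ ^ 2 = 1) :
    ∑ k, ∑ i, ⟪u k, φ i⟫ ^ 2 ≤
      (d : ℝ) * (1 + Real.sqrt (∑ p ∈ (univ : Finset (Fin N × Fin N)).filter
        (fun p => p.1 ≠ p.2), ⟪φ p.1, φ p.2⟫ ^ 2)) := by
  calc ∑ k, ∑ i, ⟪u k, φ i⟫ ^ 2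
      ≤ ∑ _k : Fin d, (1 + Real.sqrt (∑ p ∈ (univ : Finset (Fin N × Fin N)).filter
        (fun p => p.1 ≠ p.2), ⟪φ p.1, φ p.2⟫ ^ 2)) :=
        Finset.sum_le_sum fun k _ => aux_boas_bellman φ hφ (u k) (hu.1 k)
    _ = _ := by simp; ring
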